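/- arXiv:1805.02906 — 4 statements merged into one kernel-verified Lean document; each statement's English description precedes it below -/
import Mathlib

section
/- For -1 < λ < 0 and l = 2^{1/(1+λ)}, the inequality 2 log^λ(e+t) ≤ l log^λ(e+lt) holds for all t ≥ 0. -/
open Real

/-- For `-1 < λ < 0` and `l = 2^{1/(1+λ)}`, one has `2 log^λ(e+t) ≤ l log^λ(e+lt)`
for all `t ≥ 0`. -/
theorem stmt_4 (lam : ℝ) (hlam₁ : -1 < lam) (hlam₂ : lam < 0)
    (l : ℝ) (hl : l = (2:ℝ) ^ (1 / (1 + lam))) :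
    ∀ t ≥ (0:ℝ),
      2 * Real.log (Real.exp 1 + t) ^ lam ≤ l * Real.log (Real.exp 1 + l * t) ^ lam := by
  intro t ht
  have h1lam : 0 < 1 + lam := by linarith
  have hl1 : 1 ≤ l := by
    rw [hl]
    calc (1:ℝ) = 2 ^ (0:ℝ) := by norm_num
    _ ≤ 2 ^ (1/(1+lam)) := by
      apply Real.rpow_le_rpow_of_exponent_le (by norm_num)
      positivity
  have hlpos : 0 < l := by linarith
  have he : (0:ℝ) < Real.exp 1 := Real.exp_pos 1
  have he2 : (2:ℝ) ≤ Real.exp 1 := by nlinarith [Real.add_one_le_exp 1]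
  have hx : Real.exp 1 ≤ Real.exp 1 + t := by linarith
  have hxpos : 0 < Real.exp 1 + t := by linarith
  have hypos : 0 < Real.exp 1 + l * t := by nlinarith
  -- key: e + l*t ≤ (e+t)^l
  have key : Real.exp 1 + l * t ≤ (Real.exp 1 + t) ^ l := by
    have h1 : l ≤ (Real.exp 1 + t) ^ (l - 1) := by
      calc l ≤ Real.exp (l - 1) := by
              have := Real.add_one_le_exp (l - 1); linarith
        _ = Real.exp 1 ^ (l - 1) := (Real.exp_one_rpow _).symm
        _ ≤ (Real.exp 1 + t) ^ (l - 1) :=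
              Real.rpow_le_rpow he.le hx (by linarith)
    calc Real.exp 1 + l * t ≤ l * (Real.exp 1 + t) := by nlinarith
      _ ≤ (Real.exp 1 + t) ^ (l - 1) * (Real.exp 1 + t) := by nlinarith
      _ = (Real.exp 1 + t) ^ l := by
          rw [← Real.rpow_add_one hxpos.ne' (l - 1)]; ring_nf
  have hlog : Real.log (Real.exp 1 + l * t) ≤ l * Real.log (Real.exp 1 + t) := by
    calc Real.log (Real.exp 1 + l * t) ≤ Real.log ((Real.exp 1 + t) ^ l) :=
          Real.log_le_log hypos key
      _ = l * Real.log (Real.exp 1 + t) := Real.log_rpow hxpos l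
  have hlogy : 0 < Real.log (Real.exp 1 + l * t) := by
    apply Real.log_pos; nlinarith
  have hA1 : 1 ≤ Real.log (Real.exp 1 + t) := by
    calc (1:ℝ) = Real.log (Real.exp 1) := (Real.log_exp 1).symm
      _ ≤ Real.log (Real.exp 1 + t) := Real.log_le_log he hx
  set A := Real.log (Real.exp 1 + t) with hA
  have hApos : 0 < A := by linarith
  have hrp : (l * A) ^ lam ≤ Real.log (Real.exp 1 + l * t) ^ lam :=
    Real.rpow_le_rpow_of_nonpos hlogy hlog hlam₂.le
  have hmul : (l * A) ^ lam = l ^ lam * A ^ lam := Real.mul_rpow hlpos.le hApos.le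
  have hl2 : l * l ^ lam = 2 := by
    have : l * l ^ lam = l ^ (1 + lam) := by
      rw [Real.rpow_add hlpos, Real.rpow_one]
    rw [this, hl, ← Real.rpow_mul (by norm_num), one_div,
      inv_mul_cancel₀ h1lam.ne', Real.rpow_one]
  calc 2 * A ^ lam = l * ((l * A) ^ lam) := by rw [hmul, ← hl2]; ring
    _ ≤ l * Real.log (Real.exp 1 + l * t) ^ lam :=
        mul_le_mul_of_nonneg_left hrp hlpos.le
end

section
/- Let λ > 0 and let (a_{j,k})_{j≥1, 1≤k≤2^j} be nonnegative reals with a_{j,k} ≤ 2π for all j,k. If ∑_{j=1}^∞ ∑_{k=1}^{2^j} a_{j,k}² log^λ(e + 2^j a_{j,k}) < ∞, then ∑_{j=1}^∞ j^λ ∑_{k=1}^{2^j} a_{j,k}² < ∞. -/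
open Real

lemma aux_perk (lam : ℝ) (hlam : 0 < lam) (n : ℕ) (hn : 1 ≤ n) (a : ℝ) (ha : 0 ≤ a) :
    (n:ℝ)^lam * a^2 ≤ (4 / Real.log 2)^lam * (a^2 * Real.log (Real.exp 1 + 2^n * a)^lam)
      + (n:ℝ)^lam * (((2:ℝ)^(-(3:ℝ)/4))^n)^2 := by
  have hlog2 : 0 < Real.log 2 := Real.log_pos (by norm_num)
  have ht : (0:ℝ) < (2:ℝ)^(-(3:ℝ)/4) := Real.rpow_pos_of_pos (by norm_num) _
  have hepos : (1:ℝ) ≤ Real.exp 1 + 2^n * a := by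
    have := Real.one_le_exp (le_refl (0:ℝ) |>.trans zero_le_one)
    nlinarith [pow_pos (by norm_num : (0:ℝ) < 2) n, mul_nonneg (pow_pos (by norm_num : (0:ℝ) < 2) n).le ha]
  have hlognn : 0 ≤ Real.log (Real.exp 1 + 2^n * a) := Real.log_nonneg hepos
  rcases le_or_gt a (((2:ℝ)^(-(3:ℝ)/4))^n) with h1 | h1
  · have : a^2 ≤ (((2:ℝ)^(-(3:ℝ)/4))^n)^2 := pow_le_pow_left₀ ha h1 2
    have h2 : (n:ℝ)^lam * a^2 ≤ (n:ℝ)^lam * (((2:ℝ)^(-(3:ℝ)/4))^n)^2 :=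
      mul_le_mul_of_nonneg_left this (Real.rpow_nonneg (Nat.cast_nonneg n) lam)
    have h3 : 0 ≤ (4 / Real.log 2)^lam * (a^2 * Real.log (Real.exp 1 + 2^n * a)^lam) := by
      positivity
    linarith
  · have h2 : (2:ℝ)^((n:ℝ)/4) ≤ Real.exp 1 + 2^n * a := by
      have e1 : (2:ℝ) * (2:ℝ)^(-(3:ℝ)/4) = (2:ℝ)^((1:ℝ)/4) := by
        rw [show (1:ℝ)/4 = 1 + -(3:ℝ)/4 by norm_num, Real.rpow_add (by norm_num), Real.rpow_one]
      have e2 : ((2:ℝ)^((1:ℝ)/4))^n = (2:ℝ)^((n:ℝ)/4) := by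
        rw [← Real.rpow_natCast ((2:ℝ)^((1:ℝ)/4)) n, ← Real.rpow_mul (by norm_num)]
        ring_nf
      have h3 : (2:ℝ)^((n:ℝ)/4) ≤ 2^n * a := by
        calc (2:ℝ)^((n:ℝ)/4) = (2 * (2:ℝ)^(-(3:ℝ)/4))^n := by rw [e1, e2]
        _ = 2^n * ((2:ℝ)^(-(3:ℝ)/4))^n := mul_pow _ _ _
        _ ≤ 2^n * a := by
            exact mul_le_mul_of_nonneg_left h1.le (pow_pos (by norm_num : (0:ℝ)<2) n).le
      nlinarith [Real.exp_pos (1:ℝ)]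
    have hlogge : ((n:ℝ)/4) * Real.log 2 ≤ Real.log (Real.exp 1 + 2^n * a) := by
      have := Real.log_le_log (Real.rpow_pos_of_pos (by norm_num) _) h2
      rwa [Real.log_rpow (by norm_num)] at this
    have hkey : (n:ℝ)^lam ≤ (4 / Real.log 2)^lam * Real.log (Real.exp 1 + 2^n * a)^lam := by
      have e3 : (n:ℝ) = (4 / Real.log 2) * (((n:ℝ)/4) * Real.log 2) := by
        field_simp
      calc (n:ℝ)^lam = ((4 / Real.log 2) * (((n:ℝ)/4) * Real.log 2))^lam := by rw [← e3]
      _ = (4 / Real.log 2)^lam * (((n:ℝ)/4) * Real.log 2)^lam := by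
          rw [Real.mul_rpow (by positivity) (by positivity)]
      _ ≤ (4 / Real.log 2)^lam * Real.log (Real.exp 1 + 2^n * a)^lam := by
          exact mul_le_mul_of_nonneg_left
            (Real.rpow_le_rpow (by positivity) hlogge hlam.le) (by positivity)
    have h4 : (n:ℝ)^lam * a^2 ≤ (4 / Real.log 2)^lam * (a^2 * Real.log (Real.exp 1 + 2^n * a)^lam) := by
      have := mul_le_mul_of_nonneg_right hkey (sq_nonneg a)
      nlinarith [sq_nonneg a]
    have h5 : 0 ≤ (n:ℝ)^lam * (((2:ℝ)^(-(3:ℝ)/4))^n)^2 := by positivity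
    linarith

lemma aux_geom (n : ℕ) : (2:ℝ)^n * (((2:ℝ)^(-(3:ℝ)/4))^n)^2 = ((2:ℝ)^(-(1:ℝ)/2))^n := by
  have e1 : (((2:ℝ)^(-(3:ℝ)/4))^n)^2 = (((2:ℝ)^(-(3:ℝ)/4))^2)^n := by
    rw [← pow_mul, mul_comm, pow_mul]
  have e2 : ((2:ℝ)^(-(3:ℝ)/4))^2 = (2:ℝ)^(-(3:ℝ)/2) := by
    rw [← Real.rpow_natCast ((2:ℝ)^(-(3:ℝ)/4)) 2, ← Real.rpow_mul (by norm_num)]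
    norm_num
  rw [e1, e2, ← mul_pow,
    show (2:ℝ) * (2:ℝ)^(-(3:ℝ)/2) = (2:ℝ)^(-(1:ℝ)/2) by
      rw [show (-(1:ℝ)/2) = 1 + -(3:ℝ)/2 by norm_num, Real.rpow_add (by norm_num),
        Real.rpow_one]]

lemma aux_sum (lam : ℝ) :
    Summable fun j : ℕ => ((j:ℝ)+1)^lam * ((2:ℝ)^(-(1:ℝ)/2))^(j+1) := by
  have hs : ‖(2:ℝ)^(-(1:ℝ)/2)‖ < 1 := by
    rw [Real.norm_eq_abs, abs_of_pos (Real.rpow_pos_of_pos two_pos _)]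
    exact Real.rpow_lt_one_of_one_lt_of_neg (by norm_num) (by norm_num)
  have hsum : Summable fun n : ℕ => (n:ℝ)^(⌈lam⌉₊) * ((2:ℝ)^(-(1:ℝ)/2))^n :=
    summable_pow_mul_geometric_of_norm_lt_one _ hs
  have hsum2 := (summable_nat_add_iff 1).2 hsum
  apply Summable.of_nonneg_of_le (fun j => by positivity) _ hsum2
  intro j
  have h1 : ((j:ℝ)+1)^lam ≤ ((j:ℝ)+1)^(⌈lam⌉₊:ℝ) :=
    Real.rpow_le_rpow_of_exponent_le (by have := Nat.cast_nonneg (α := ℝ) j; linarith)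
      (Nat.le_ceil lam)
  rw [Real.rpow_natCast] at h1
  have h2 : (0:ℝ) ≤ ((2:ℝ)^(-(1:ℝ)/2))^(j+1) := by positivity
  calc ((j:ℝ)+1)^lam * ((2:ℝ)^(-(1:ℝ)/2))^(j+1)
      ≤ ((j:ℝ)+1)^(⌈lam⌉₊) * ((2:ℝ)^(-(1:ℝ)/2))^(j+1) := mul_le_mul_of_nonneg_right h1 h2
    _ = ((j+1:ℕ):ℝ)^(⌈lam⌉₊) * ((2:ℝ)^(-(1:ℝ)/2))^(j+1) := by push_cast; ring

/-- Let `λ > 0` and let `a_{j,k}`, `j ≥ 1`, `1 ≤ k ≤ 2^j`, be nonnegative reals bounded by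
`2π`. If `∑_j ∑_k a_{j,k}² log^λ(e + 2^j a_{j,k}) < ∞`, then `∑_j j^λ ∑_k a_{j,k}² < ∞`. -/
theorem stmt_7 (lam : ℝ) (hlam : 0 < lam) (a : ℕ → ℕ → ℝ)
    (ha : ∀ j k, 0 ≤ a j k) (hb : ∀ j k, a j k ≤ 2 * π)
    (h : Summable fun j : ℕ =>
      ∑ k ∈ Finset.Icc 1 (2 ^ (j + 1)),
        a (j + 1) k ^ 2 * Real.log (Real.exp 1 + 2 ^ (j + 1) * a (j + 1) k) ^ lam) :
    Summable fun j : ℕ =>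
      ((j:ℝ) + 1) ^ lam * ∑ k ∈ Finset.Icc 1 (2 ^ (j + 1)), a (j + 1) k ^ 2 := by
  set C := (4 / Real.log 2)^lam with hC
  have hCnn : 0 ≤ C := Real.rpow_nonneg (by positivity) _
  have hbound : Summable fun j : ℕ =>
      C * (∑ k ∈ Finset.Icc 1 (2 ^ (j + 1)),
        a (j + 1) k ^ 2 * Real.log (Real.exp 1 + 2 ^ (j + 1) * a (j + 1) k) ^ lam)
      + ((j:ℝ)+1)^lam * ((2:ℝ)^(-(1:ℝ)/2))^(j+1) :=
    (h.mul_left C).add (aux_sum lam)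
  apply Summable.of_nonneg_of_le _ _ hbound
  · intro j
    apply mul_nonneg (Real.rpow_nonneg (by positivity) _)
    exact Finset.sum_nonneg fun k _ => sq_nonneg _
  · intro j
    have hcard : (Finset.Icc 1 (2 ^ (j + 1))).card = 2 ^ (j + 1) := by
      rw [Nat.card_Icc, Nat.add_sub_cancel]
    calc ((j:ℝ) + 1) ^ lam * ∑ k ∈ Finset.Icc 1 (2 ^ (j + 1)), a (j + 1) k ^ 2
        = ∑ k ∈ Finset.Icc 1 (2 ^ (j + 1)), ((j:ℝ) + 1) ^ lam * a (j + 1) k ^ 2 :=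
          Finset.mul_sum _ _ _
      _ ≤ ∑ k ∈ Finset.Icc 1 (2 ^ (j + 1)),
            (C * (a (j + 1) k ^ 2 * Real.log (Real.exp 1 + 2 ^ (j + 1) * a (j + 1) k) ^ lam)
              + ((j:ℝ)+1)^lam * (((2:ℝ)^(-(3:ℝ)/4))^(j+1))^2) := by
          apply Finset.sum_le_sum
          intro k _
          have := aux_perk lam hlam (j+1) (Nat.le_add_left 1 j) (a (j+1) k) (ha _ _)
          push_cast at this ⊢
          convert this using 3
      _ = C * (∑ k ∈ Finset.Icc 1 (2 ^ (j + 1)),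
            a (j + 1) k ^ 2 * Real.log (Real.exp 1 + 2 ^ (j + 1) * a (j + 1) k) ^ lam)
            + ((j:ℝ)+1)^lam * ((2:ℝ)^(-(1:ℝ)/2))^(j+1) := by
          rw [Finset.sum_add_distrib, ← Finset.mul_sum, Finset.sum_const, hcard,
            nsmul_eq_mul]
          congr 1
          push_cast
          rw [← mul_assoc, mul_comm ((2:ℝ)^(j+1)) (((j:ℝ)+1)^lam), mul_assoc,
            aux_geom (j+1)]
end

section
/- Let -1 < λ < 0 and let (a_{j,k})_{j≥1, 1≤k≤2^j} be nonnegative reals with a_{j,k} ≤ 2π for all j,k. Then ∑_{j=1}^∞ j^λ ∑_{k=1}^{2^j} a_{j,k}² < ∞ if and only if ∑_{j=1}^∞ ∑_{k=1}^{2^j} a_{j,k}² log^λ(e + 2^j a_{j,k}) < ∞. -/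
open Real

lemma aux_bound16 : ∀ n : ℕ, 1 ≤ n → Real.exp 1 + 2 * π * 2 ^ n ≤ 16 ^ n := by
  intro n hn
  induction n with
  | zero => omega
  | succ m ih =>
    have he : Real.exp 1 < 2.7182818286 := Real.exp_one_lt_d9
    have hpi : π < 3.15 := Real.pi_lt_d2
    rcases Nat.eq_zero_or_pos m with hm | hm
    · subst hm; norm_num; nlinarith
    · have := ih hm
      have h2 : (0:ℝ) < 2 ^ m := by positivity
      have hexp : (0:ℝ) < Real.exp 1 := Real.exp_pos 1
      calc Real.exp 1 + 2 * π * 2 ^ (m+1)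
          = Real.exp 1 + (2 * π * 2 ^ m) * 2 := by ring
        _ ≤ 16 * (Real.exp 1 + 2 * π * 2 ^ m) := by nlinarith [Real.pi_pos]
        _ ≤ 16 * 16 ^ m := by linarith
        _ = 16 ^ (m+1) := by ring

lemma aux_log_one_le (n : ℕ) (x : ℝ) (hx0 : 0 ≤ x) :
    1 ≤ Real.log (Real.exp 1 + 2 ^ n * x) := by
  have h1 : Real.exp 1 ≤ Real.exp 1 + 2 ^ n * x := by
    have : (0:ℝ) ≤ 2 ^ n * x := by positivity
    linarith
  calc (1:ℝ) = Real.log (Real.exp 1) := (Real.log_exp 1).symm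
    _ ≤ _ := Real.log_le_log (Real.exp_pos 1) h1

lemma aux_easy (lam : ℝ) (hlam₂ : lam < 0) (n : ℕ) (hn : 1 ≤ n) (x : ℝ)
    (hx0 : 0 ≤ x) (hx2 : x ≤ 2 * π) :
    (Real.log 16) ^ lam * ((n:ℝ) ^ lam * x ^ 2) ≤
      x ^ 2 * Real.log (Real.exp 1 + 2 ^ n * x) ^ lam := by
  have hlogpos : 0 < Real.log (Real.exp 1 + 2 ^ n * x) :=
    lt_of_lt_of_le one_pos (aux_log_one_le n x hx0)
  have hle : Real.log (Real.exp 1 + 2 ^ n * x) ≤ Real.log 16 * (n:ℝ) := by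
    have h1 : Real.exp 1 + 2 ^ n * x ≤ 16 ^ n := by
      have : (2:ℝ) ^ n * x ≤ 2 * π * 2 ^ n := by
        have h2 : (0:ℝ) < 2 ^ n := by positivity
        nlinarith
      have := aux_bound16 n hn
      linarith
    calc Real.log (Real.exp 1 + 2 ^ n * x) ≤ Real.log (16 ^ n) := by
          apply Real.log_le_log _ h1
          positivity
      _ = Real.log 16 * (n:ℝ) := by rw [Real.log_pow]; ring
  have hr : (Real.log 16 * (n:ℝ)) ^ lam ≤ Real.log (Real.exp 1 + 2 ^ n * x) ^ lam :=
    Real.rpow_le_rpow_of_nonpos hlogpos hle hlam₂.le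
  have hsplit : (Real.log 16 * (n:ℝ)) ^ lam = (Real.log 16) ^ lam * (n:ℝ) ^ lam := by
    apply Real.mul_rpow _ (Nat.cast_nonneg n)
    have : (1:ℝ) < 16 := by norm_num
    exact (Real.log_pos this).le
  calc (Real.log 16) ^ lam * ((n:ℝ) ^ lam * x ^ 2)
      = x ^ 2 * (Real.log 16 * (n:ℝ)) ^ lam := by rw [hsplit]; ring
    _ ≤ x ^ 2 * Real.log (Real.exp 1 + 2 ^ n * x) ^ lam := by
        apply mul_le_mul_of_nonneg_left hr (by positivity)

lemma aux_hard (lam : ℝ) (hlam₂ : lam < 0) (n : ℕ) (hn : 1 ≤ n) (x : ℝ)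
    (hx0 : 0 ≤ x) (hx2 : x ≤ 2 * π) :
    x ^ 2 * Real.log (Real.exp 1 + 2 ^ n * x) ^ lam ≤
      ((Real.log 2) / 4) ^ lam * ((n:ℝ) ^ lam * x ^ 2) + ((2:ℝ) ^ (-(3/2) : ℝ)) ^ n := by
  set c : ℝ := (2:ℝ) ^ (-(3/4) : ℝ) with hc
  have hc0 : 0 < c := Real.rpow_pos_of_pos two_pos _
  have hfirst : 0 ≤ ((Real.log 2) / 4) ^ lam * ((n:ℝ) ^ lam * x ^ 2) := by positivity
  have hcsq : c ^ 2 = (2:ℝ) ^ (-(3/2) : ℝ) := by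
    rw [hc, ← Real.rpow_natCast ((2:ℝ) ^ (-(3/4):ℝ)) 2, ← Real.rpow_mul (by norm_num)]
    norm_num
  by_cases hsmall : x ≤ c ^ n
  · have h1 : Real.log (Real.exp 1 + 2 ^ n * x) ^ lam ≤ 1 :=
      Real.rpow_le_one_of_one_le_of_nonpos (aux_log_one_le n x hx0) hlam₂.le
    have h2 : x ^ 2 * Real.log (Real.exp 1 + 2 ^ n * x) ^ lam ≤ x ^ 2 := by
      nlinarith [sq_nonneg x]
    have h3 : x ^ 2 ≤ ((2:ℝ) ^ (-(3/2) : ℝ)) ^ n := by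
      calc x ^ 2 ≤ (c ^ n) ^ 2 := by
            apply pow_le_pow_left₀ hx0 hsmall
        _ = (c ^ 2) ^ n := by rw [← pow_mul, ← pow_mul, Nat.mul_comm]
        _ = _ := by rw [hcsq]
    linarith
  · push_neg at hsmall
    have h2na : (2:ℝ) ^ ((n:ℝ) / 4) ≤ 2 ^ n * x := by
      have h1 : (2:ℝ) * c = (2:ℝ) ^ ((1:ℝ)/4) := by
        rw [hc, show ((1:ℝ)/4) = 1 + (-(3/4)) by norm_num, Real.rpow_add two_pos,
          Real.rpow_one]
      have h2 : ((2:ℝ) * c) ^ n = (2:ℝ) ^ ((n:ℝ)/4) := by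
        rw [h1, ← Real.rpow_natCast ((2:ℝ) ^ ((1:ℝ)/4)) n, ← Real.rpow_mul (by norm_num)]
        ring_nf
      calc (2:ℝ) ^ ((n:ℝ)/4) = (2:ℝ) ^ n * c ^ n := by rw [← h2, mul_pow]
        _ ≤ 2 ^ n * x := by
            apply mul_le_mul_of_nonneg_left hsmall.le (by positivity)
    have hlog : (Real.log 2) / 4 * (n:ℝ) ≤ Real.log (Real.exp 1 + 2 ^ n * x) := by
      have hxpos : (0:ℝ) < 2 ^ n * x :=
        lt_of_lt_of_le (Real.rpow_pos_of_pos two_pos _) h2na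
      calc (Real.log 2) / 4 * (n:ℝ) = Real.log ((2:ℝ) ^ ((n:ℝ)/4)) := by
            rw [Real.log_rpow two_pos]; ring
        _ ≤ Real.log (2 ^ n * x) :=
            Real.log_le_log (Real.rpow_pos_of_pos two_pos _) h2na
        _ ≤ Real.log (Real.exp 1 + 2 ^ n * x) := by
            apply Real.log_le_log hxpos
            linarith [Real.exp_pos 1]
    have hnpos : (0:ℝ) < (Real.log 2) / 4 * (n:ℝ) := by
      have := Real.log_pos (by norm_num : (1:ℝ) < 2)
      have : (0:ℝ) < (n:ℝ) := by exact_mod_cast hn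
      positivity
    have hr : Real.log (Real.exp 1 + 2 ^ n * x) ^ lam ≤ ((Real.log 2) / 4 * (n:ℝ)) ^ lam :=
      Real.rpow_le_rpow_of_nonpos hnpos hlog hlam₂.le
    have hsplit : ((Real.log 2) / 4 * (n:ℝ)) ^ lam = ((Real.log 2)/4) ^ lam * (n:ℝ) ^ lam := by
      apply Real.mul_rpow _ (Nat.cast_nonneg n)
      have := Real.log_pos (by norm_num : (1:ℝ) < 2)
      positivity
    have hgeom : (0:ℝ) ≤ ((2:ℝ) ^ (-(3/2) : ℝ)) ^ n := by positivity
    have : x ^ 2 * Real.log (Real.exp 1 + 2 ^ n * x) ^ lam ≤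
        ((Real.log 2)/4) ^ lam * ((n:ℝ) ^ lam * x ^ 2) := by
      calc x ^ 2 * Real.log (Real.exp 1 + 2 ^ n * x) ^ lam
          ≤ x ^ 2 * (((Real.log 2) / 4 * (n:ℝ)) ^ lam) :=
            mul_le_mul_of_nonneg_left hr (by positivity)
        _ = ((Real.log 2)/4) ^ lam * ((n:ℝ) ^ lam * x ^ 2) := by rw [hsplit]; ring
    linarith

/-- Let `-1 < λ < 0` and let `a_{j,k}`, `j ≥ 1`, `1 ≤ k ≤ 2^j`, be nonnegative reals bounded
by `2π`. Then `∑_j j^λ ∑_k a_{j,k}² < ∞` iff `∑_j ∑_k a_{j,k}² log^λ(e + 2^j a_{j,k}) < ∞`. -/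
theorem stmt_8 (lam : ℝ) (hlam₁ : -1 < lam) (hlam₂ : lam < 0) (a : ℕ → ℕ → ℝ)
    (ha : ∀ j k, 0 ≤ a j k) (hb : ∀ j k, a j k ≤ 2 * π) :
    (Summable fun j : ℕ =>
      ((j:ℝ) + 1) ^ lam * ∑ k ∈ Finset.Icc 1 (2 ^ (j + 1)), a (j + 1) k ^ 2)
    ↔ (Summable fun j : ℕ =>
      ∑ k ∈ Finset.Icc 1 (2 ^ (j + 1)),
        a (j + 1) k ^ 2 * Real.log (Real.exp 1 + 2 ^ (j + 1) * a (j + 1) k) ^ lam) := by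
  have hcast : ∀ j : ℕ, ((j:ℝ) + 1) = ((j + 1 : ℕ) : ℝ) := by intro j; push_cast; ring
  constructor
  · intro hf
    set C : ℝ := ((Real.log 2) / 4) ^ lam with hC
    have hC0 : 0 ≤ C := Real.rpow_nonneg (by positivity) _
    apply Summable.of_nonneg_of_le
      (f := fun j : ℕ =>
        C * (((j:ℝ) + 1) ^ lam * ∑ k ∈ Finset.Icc 1 (2 ^ (j + 1)), a (j + 1) k ^ 2)
          + ((2:ℝ) ^ (-(1/2) : ℝ)) ^ (j + 1))
    · intro j
      apply Finset.sum_nonneg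
      intro k _
      have h1 : (0:ℝ) ≤ Real.log (Real.exp 1 + 2 ^ (j+1) * a (j+1) k) ^ lam :=
        Real.rpow_nonneg (le_trans zero_le_one (aux_log_one_le _ _ (ha _ _))) _
      positivity
    · intro j
      have hbound : ∀ k ∈ Finset.Icc 1 (2 ^ (j + 1)),
          a (j+1) k ^ 2 * Real.log (Real.exp 1 + 2 ^ (j+1) * a (j+1) k) ^ lam ≤
            C * (((j:ℝ)+1) ^ lam * a (j+1) k ^ 2) + ((2:ℝ) ^ (-(3/2) : ℝ)) ^ (j+1) := by
        intro k _
        have := aux_hard lam hlam₂ (j+1) (Nat.le_add_left 1 j) (a (j+1) k) (ha _ _) (hb _ _)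
        rw [hcast j]
        linarith
      calc ∑ k ∈ Finset.Icc 1 (2 ^ (j + 1)),
            a (j+1) k ^ 2 * Real.log (Real.exp 1 + 2 ^ (j+1) * a (j+1) k) ^ lam
          ≤ ∑ k ∈ Finset.Icc 1 (2 ^ (j + 1)),
            (C * (((j:ℝ)+1) ^ lam * a (j+1) k ^ 2) + ((2:ℝ) ^ (-(3/2) : ℝ)) ^ (j+1)) :=
            Finset.sum_le_sum hbound
        _ = C * (((j:ℝ)+1) ^ lam * ∑ k ∈ Finset.Icc 1 (2 ^ (j + 1)), a (j+1) k ^ 2)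
              + (2:ℝ) ^ (j+1) * ((2:ℝ) ^ (-(3/2) : ℝ)) ^ (j+1) := by
            rw [Finset.sum_add_distrib, Finset.sum_const, Nat.card_Icc]
            simp only [← mul_assoc]
            rw [← Finset.mul_sum, nsmul_eq_mul]
            push_cast
            ring
        _ = C * (((j:ℝ)+1) ^ lam * ∑ k ∈ Finset.Icc 1 (2 ^ (j + 1)), a (j+1) k ^ 2)
              + ((2:ℝ) ^ (-(1/2) : ℝ)) ^ (j+1) := by
            congr 1
            rw [← mul_pow]
            congr 1
            rw [show (-(1/2):ℝ) = 1 + (-(3/2)) by norm_num, Real.rpow_add two_pos,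
              Real.rpow_one]
    · apply Summable.add (hf.mul_left C)
      have h0 : (0:ℝ) ≤ (2:ℝ) ^ (-(1/2) : ℝ) := by positivity
      have h1 : (2:ℝ) ^ (-(1/2) : ℝ) < 1 :=
        Real.rpow_lt_one_of_one_lt_of_neg (by norm_num) (by norm_num)
      have := (summable_geometric_of_lt_one h0 h1).mul_left ((2:ℝ) ^ (-(1/2) : ℝ))
      apply this.congr
      intro j
      rw [pow_succ]
      ring
  · intro hg
    set D : ℝ := (Real.log 16) ^ lam with hD
    have hlog16 : 0 < Real.log 16 := Real.log_pos (by norm_num)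
    have hD0 : 0 < D := Real.rpow_pos_of_pos hlog16 _
    apply Summable.of_nonneg_of_le
      (f := fun j : ℕ => D⁻¹ *
        ∑ k ∈ Finset.Icc 1 (2 ^ (j + 1)),
          a (j + 1) k ^ 2 * Real.log (Real.exp 1 + 2 ^ (j + 1) * a (j + 1) k) ^ lam)
    · intro j
      apply mul_nonneg (Real.rpow_nonneg (by positivity) _)
      apply Finset.sum_nonneg
      intro k _
      positivity
    · intro j
      have key : D * (((j:ℝ) + 1) ^ lam * ∑ k ∈ Finset.Icc 1 (2 ^ (j + 1)), a (j+1) k ^ 2) ≤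
          ∑ k ∈ Finset.Icc 1 (2 ^ (j + 1)),
            a (j+1) k ^ 2 * Real.log (Real.exp 1 + 2 ^ (j+1) * a (j+1) k) ^ lam := by
        rw [Finset.mul_sum, Finset.mul_sum]
        apply Finset.sum_le_sum
        intro k _
        have := aux_easy lam hlam₂ (j+1) (Nat.le_add_left 1 j) (a (j+1) k) (ha _ _) (hb _ _)
        rw [hcast j]
        calc D * (((j+1:ℕ):ℝ) ^ lam * a (j+1) k ^ 2) =
            Real.log 16 ^ lam * (((j+1:ℕ):ℝ) ^ lam * a (j+1) k ^ 2) := by rw [hD]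
          _ ≤ _ := this
      calc ((j:ℝ) + 1) ^ lam * ∑ k ∈ Finset.Icc 1 (2 ^ (j + 1)), a (j+1) k ^ 2
          = D⁻¹ * (D * (((j:ℝ) + 1) ^ lam *
              ∑ k ∈ Finset.Icc 1 (2 ^ (j + 1)), a (j+1) k ^ 2)) := by
            field_simp
          _ ≤ _ := mul_le_mul_of_nonneg_left key (by positivity)
    · exact hg.mul_left _
end

section
/- Fix the standard dyadic decomposition {Γ_{j,k}} of the unit circle. For any n-level dyadic arc Γ_{n,m} and any j ≥ n, the number of j-level dyadic arcs Γ_{j,l} whose associated annular decomposition 𝒫(Γ_{j,l}) contains Γ_{n,m} is at most 3·2^{j−n}. -/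
/-!
We model the annular decomposition `𝒫(Γ_{j,l})` of the unit circle around a dyadic arc
`Γ_{j,l}` combinatorially, via the dyadic intervals `I_{n,m} = [2π(m-1)/2ⁿ, 2πm/2ⁿ]` of
`[0,2π]`.  A level-`n` arc is identified with its (1-based) index `m ∈ {1,…,2ⁿ}`, i.e. with
the interval `[m-1, m]` in level-`n` units (taken mod `2ⁿ` on the circle).

Starting from `Γ_{j,l}` and its brother (together forming their level-`(j-1)` parent), the
construction successively adjoins, at levels `n = j-1, j-2, …`, the adjacent dyadic arc on
each side of the covered region together with its brother whenever that brother lies further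
out (i.e. shares a parent with it), stopping as soon as the arcs adjoined on the two sides
meet.  The covered region is an arc; we track its endpoints `(L, R)` in level-`n` units
(as integers, unwrapped; indices of chosen arcs are read off modulo `2ⁿ`).
-/

/-- One step of the construction at a given level, in that level's units: on the
anticlockwise side adjoin the arc `[R, R+1]`, together with `[R+1, R+2]` if it shares a
parent with it (i.e. if `R` is even); on the clockwise side adjoin `[L-1, L]`, together
with `[L-2, L-1]` if it shares a parent with it (i.e. if `L` is even). -/
def stepLR (p : ℤ × ℤ) : ℤ × ℤ :=
  (if p.1 % 2 = 0 then p.1 - 2 else p.1 - 1, if p.2 % 2 = 0 then p.2 + 2 else p.2 + 1)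

/-- `stateLR l i` is the pair of endpoints of the covered region around the `j`-level arc of
index `l`, expressed in level-`(j-1-i)` units, before the arcs of level `j-1-i` are adjoined.
Initially (`i = 0`) the covered region is the level-`(j-1)` parent of `Γ_{j,l}` and its
brother, namely `[p, p+1]` with 0-based parent index `p = (l-1)/2`. Passing to the next
level divides the (even) endpoints by two. -/
def stateLR (l : ℕ) : ℕ → ℤ × ℤ
  | 0 => (((l:ℤ) - 1) / 2, ((l:ℤ) - 1) / 2 + 1)
  | i + 1 => ((stepLR (stateLR l i)).1 / 2, (stepLR (stateLR l i)).2 / 2)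

/-- `inducesArc j l n m` : the level-`n` arc `Γ_{n,m}` belongs to the decomposition
`𝒫(Γ_{j,l})`.  For `n = j` these are `Γ_{j,l}` and its brother.  For `1 ≤ n < j` the
construction must not have stopped at any earlier level (the region adjoined at a level has
total length `R' - L'`, and the two sides meet exactly when this reaches the circumference
`2ⁿ` in level-`n` units), and `m` must be (mod `2ⁿ`) one of the indices of the arcs adjoined
at level `n`: `R`, `R+1` (the latter if `R` is even), `L-1`, and `L-2` (the latter if `L` is
even), where `(L, R) = stateLR l (j-1-n)`. -/
def inducesArc (j l n m : ℕ) : Prop :=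
  (n = j ∧ (m = l ∨ (l % 2 = 1 ∧ m = l + 1) ∨ (l % 2 = 0 ∧ m = l - 1))) ∨
  (1 ≤ n ∧ n < j ∧
    (∀ i < j - 1 - n,
      (stepLR (stateLR l i)).2 - (stepLR (stateLR l i)).1 < 2 ^ (j - 1 - i)) ∧
    (let L := (stateLR l (j - 1 - n)).1
     let R := (stateLR l (j - 1 - n)).2
     ((m:ℤ) - 1) % 2 ^ n = R % 2 ^ n ∨
     (R % 2 = 0 ∧ ((m:ℤ) - 1) % 2 ^ n = (R + 1) % 2 ^ n) ∨
     ((m:ℤ) - 1) % 2 ^ n = (L - 1) % 2 ^ n ∨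
     (L % 2 = 0 ∧ ((m:ℤ) - 1) % 2 ^ n = (L - 2) % 2 ^ n)))

-- Auxiliary lemmas for the proof

private lemma my_ediv_ediv (a b c : ℤ) (ha : 0 ≤ a) (hb : 0 ≤ b) (hc : 0 ≤ c) :
    a / b / c = a / (b * c) := by
  lift a to ℕ using ha
  lift b to ℕ using hb
  lift c to ℕ using hc
  rw [← Nat.cast_mul, ← Int.natCast_ediv, ← Int.natCast_ediv, ← Int.natCast_ediv,
    Nat.div_div_eq_div_mul]

/-- Closed form for `stateLR`. -/
lemma stateLR_eq (l : ℕ) (hl : 1 ≤ l) (i : ℕ) :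
    stateLR l i = ((((l:ℤ) - 1) / 2 + 1) / 2 ^ i - 1,
                   (((l:ℤ) - 1) / 2 + 2 ^ i - 1) / 2 ^ i + 1) := by
  have hl1 : (0:ℤ) ≤ (l:ℤ) - 1 := by
    have : (1:ℤ) ≤ (l:ℤ) := by exact_mod_cast hl
    omega
  have hx : (0:ℤ) ≤ ((l:ℤ) - 1) / 2 := Int.ediv_nonneg hl1 (by norm_num)
  set x := ((l:ℤ) - 1) / 2 with hxdef
  induction i with
  | zero => simp [stateLR, hxdef]
  | succ i ih =>
    have h2i : (0:ℤ) < 2 ^ i := by positivity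
    have h1 : (x + 1) / 2 ^ (i+1) = ((x + 1) / 2 ^ i) / 2 := by
      rw [my_ediv_ediv (x+1) (2^i) 2 (by omega) (le_of_lt h2i) (by norm_num), ← pow_succ]
    have h2 : (x + 2 ^ (i+1) - 1) / 2 ^ (i+1) = ((x + 2 ^ i - 1) / 2 ^ i + 1) / 2 := by
      have e1 : x + 2 ^ (i+1) - 1 = (x + 2 ^ i - 1) + 1 * 2 ^ i := by
        rw [pow_succ]; ring
      have e2 : (x + 2 ^ (i+1) - 1) / 2 ^ (i+1) = (x + 2 ^ (i+1) - 1) / 2 ^ i / 2 := by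
        rw [my_ediv_ediv _ (2^i) 2 (by omega) (le_of_lt h2i) (by norm_num), ← pow_succ]
      rw [e2, e1, Int.add_mul_ediv_right _ _ (ne_of_gt h2i)]
    rw [stateLR, ih]
    simp only [stepLR]
    rw [Prod.mk.injEq]
    constructor
    · rw [h1]
      generalize (x + 1) / 2 ^ i = a
      split_ifs with h <;> omega
    · rw [h2]
      generalize (x + 2 ^ i - 1) / 2 ^ i = b
      split_ifs with h <;> omega

/-- A block of `cnt` consecutive indices inside the `v`-th block of size `B`. -/
def blk (v B r₀ cnt : ℕ) : Finset ℕ := (Finset.range cnt).image (fun r => v * B + r₀ + r + 1)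

lemma card_blk (v B r₀ cnt : ℕ) : (blk v B r₀ cnt).card ≤ cnt :=
  le_trans Finset.card_image_le (by simp)

lemma mem_blk {v B r₀ cnt l r : ℕ} (hl : l = v * B + r + 1) (h1 : r₀ ≤ r)
    (h2 : r < r₀ + cnt) : l ∈ blk v B r₀ cnt := by
  simp only [blk, Finset.mem_image, Finset.mem_range]
  refine ⟨r - r₀, by omega, ?_⟩
  subst hl
  generalize v * B = P
  omega

/-- The localization lemma: an `l` with `inducesArc j l n m` (for `n < j`) lies in one of
eight explicit congruence pieces. -/
lemma loc (n j l m : ℕ) (hn : 1 ≤ n) (hnj : n < j) (hl1 : 1 ≤ l) (hl2 : l ≤ 2 ^ j)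
    (hm1 : 1 ≤ m) (hm2 : m ≤ 2 ^ n) (h : inducesArc j l n m) :
    ∃ v r : ℕ, l = v * 2 ^ (j - n) + r + 1 ∧ r < 2 ^ (j - n) ∧
      (((v:ℤ) = ((m:ℤ) - 2) % 2 ^ n ∧ r < 2) ∨
       ((v:ℤ) = ((m:ℤ) - 3) % 2 ^ n ∧ 2 ≤ r) ∨
       ((v:ℤ) = ((m:ℤ) - 3) % 2 ^ n ∧ r < 2 ∧ (m:ℤ) % 2 = 0) ∨
       ((v:ℤ) = ((m:ℤ) - 4) % 2 ^ n ∧ 2 ≤ r ∧ (m:ℤ) % 2 = 0) ∨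
       ((v:ℤ) = ((m:ℤ) + 1) % 2 ^ n ∧ r < 2 ^ (j - n) - 2) ∨
       ((v:ℤ) = ((m:ℤ)) % 2 ^ n ∧ 2 ^ (j - n) - 2 ≤ r) ∨
       ((v:ℤ) = ((m:ℤ) + 2) % 2 ^ n ∧ r < 2 ^ (j - n) - 2 ∧ (m:ℤ) % 2 = 1) ∨
       ((v:ℤ) = ((m:ℤ) + 1) % 2 ^ n ∧ 2 ^ (j - n) - 2 ≤ r ∧ (m:ℤ) % 2 = 1)) := by
  have hidef : j - 1 - n + 1 = j - n := by omega
  set i := j - 1 - n with hi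
  have h2i : (0:ℤ) < 2 ^ i := by positivity
  have hNpos : (0:ℤ) < 2 ^ n := by positivity
  have hBpos : (0:ℤ) < 2 ^ (j - n) := by positivity
  have hBz : ((2:ℤ)) ^ (j - n) = 2 ^ i * 2 := by rw [← pow_succ, hidef]
  have hlz : (1:ℤ) ≤ (l:ℤ) := by exact_mod_cast hl1
  have hlz2 : (l:ℤ) ≤ 2 ^ j := by exact_mod_cast hl2
  have hmz : (1:ℤ) ≤ (m:ℤ) := by exact_mod_cast hm1
  have hmz2 : (m:ℤ) ≤ 2 ^ n := by exact_mod_cast hm2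
  set q : ℤ := ((l:ℤ) - 1) / 2 ^ (j - n) with hqdef
  set rz : ℤ := ((l:ℤ) - 1) % 2 ^ (j - n) with hrdef
  have hdm : 2 ^ (j - n) * q + rz = (l:ℤ) - 1 := Int.mul_ediv_add_emod _ _
  have hr0 : 0 ≤ rz := Int.emod_nonneg _ (ne_of_gt hBpos)
  have hr1 : rz < 2 ^ (j - n) := Int.emod_lt_of_pos _ hBpos
  have hq0 : 0 ≤ q := Int.ediv_nonneg (by omega) (le_of_lt hBpos)
  have hqN : q < 2 ^ n := by
    rw [hqdef, Int.ediv_lt_iff_lt_mul hBpos]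
    have hpj : ((2:ℤ)) ^ n * 2 ^ (j - n) = 2 ^ j := by
      rw [← pow_add]; congr 1; omega
    rw [hpj]; omega
  set s : ℤ := rz / 2 with hsdef
  have hs0 : 0 ≤ s := Int.ediv_nonneg hr0 (by norm_num)
  have hs1 : s < 2 ^ i := by
    rw [hBz] at hr1; omega
  have hx : ((l:ℤ) - 1) / 2 = s + q * 2 ^ i := by
    have e : (l:ℤ) - 1 = rz + (q * 2 ^ i) * 2 := by rw [← hdm, hBz]; ring
    rw [e, Int.add_mul_ediv_right _ _ (by norm_num : (2:ℤ) ≠ 0)]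
  have hR : (((l:ℤ) - 1) / 2 + 2 ^ i - 1) / 2 ^ i + 1 = q + 1 + (s + 2 ^ i - 1) / 2 ^ i := by
    rw [hx]
    have e : s + q * 2 ^ i + 2 ^ i - 1 = (s + 2 ^ i - 1) + q * 2 ^ i := by ring
    rw [e, Int.add_mul_ediv_right _ _ (ne_of_gt h2i)]; ring
  have hL : (((l:ℤ) - 1) / 2 + 1) / 2 ^ i - 1 = q - 1 + (s + 1) / 2 ^ i := by
    rw [hx]
    have e : s + q * 2 ^ i + 1 = (s + 1) + q * 2 ^ i := by ring
    rw [e, Int.add_mul_ediv_right _ _ (ne_of_gt h2i)]; ring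
  have heR : (s = 0 ∧ (s + 2 ^ i - 1) / 2 ^ i = 0) ∨ (1 ≤ s ∧ (s + 2 ^ i - 1) / 2 ^ i = 1) := by
    rcases eq_or_lt_of_le hs0 with hz | hz
    · exact Or.inl ⟨hz.symm, Int.ediv_eq_zero_of_lt (by omega) (by omega)⟩
    · refine Or.inr ⟨hz, ?_⟩
      have e : s + 2 ^ i - 1 = (s - 1) + 1 * 2 ^ i := by ring
      rw [e, Int.add_mul_ediv_right _ _ (ne_of_gt h2i),
        Int.ediv_eq_zero_of_lt (by omega) (by omega)]
      norm_num
  have heL : (s = 2 ^ i - 1 ∧ (s + 1) / 2 ^ i = 1) ∨ (s < 2 ^ i - 1 ∧ (s + 1) / 2 ^ i = 0) := by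
    rcases eq_or_lt_of_le (by omega : s + 1 ≤ 2 ^ i) with hz | hz
    · exact Or.inl ⟨by omega, by rw [hz, Int.ediv_self (ne_of_gt h2i)]⟩
    · exact Or.inr ⟨by omega, Int.ediv_eq_zero_of_lt (by omega) hz⟩
  -- key congruence extraction
  have key : ∀ c : ℤ, (m:ℤ) - 1 = (q + c) % 2 ^ n → q = ((m:ℤ) - 1 - c) % 2 ^ n := by
    intro c hEq
    have h1 : ((m:ℤ) - 1 - c) % 2 ^ n = (q + c - c) % 2 ^ n := by
      rw [Int.sub_emod, hEq, Int.emod_emod_of_dvd _ dvd_rfl, ← Int.sub_emod]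
    simp only [add_sub_cancel_right] at h1
    rw [h1, Int.emod_eq_of_lt hq0 hqN]
  have par : ∀ c : ℤ, q = ((m:ℤ) - 1 - c) % 2 ^ n → q % 2 = ((m:ℤ) - 1 - c) % 2 := by
    intro c hq'
    rw [hq']
    exact Int.emod_emod_of_dvd _ (dvd_pow_self 2 (by omega))
  -- unfold the hypothesis
  simp only [inducesArc] at h
  rcases h with ⟨h1, -⟩ | ⟨-, -, -, hc⟩
  · omega
  rw [stateLR_eq l hl1] at hc
  rw [hR, hL] at hc
  have hmt : ((m:ℤ) - 1) % 2 ^ n = (m:ℤ) - 1 := Int.emod_eq_of_lt (by omega) (by omega)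
  rw [hmt] at hc
  have hcast : ((2 ^ (j - n) : ℕ) : ℤ) = 2 ^ i * 2 := by push_cast; rw [← hBz]
  have hql : (l:ℤ) = q * (2 ^ i * 2) + rz + 1 := by linear_combination (-1 : ℤ) * hdm + q * hBz
  refine ⟨q.toNat, rz.toNat, ?_, ?_, ?_⟩
  · have e1 : ((q.toNat : ℕ) : ℤ) = q := Int.toNat_of_nonneg hq0
    have e2 : ((rz.toNat : ℕ) : ℤ) = rz := Int.toNat_of_nonneg hr0
    have : (l:ℤ) = (q.toNat : ℤ) * ((2 ^ (j - n) : ℕ) : ℤ) + (rz.toNat : ℤ) + 1 := by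
      rw [e1, e2, hcast]; exact hql
    exact_mod_cast this
  · have e2 : ((rz.toNat : ℕ) : ℤ) = rz := Int.toNat_of_nonneg hr0
    omega
  · have e1 : ((q.toNat : ℕ) : ℤ) = q := Int.toNat_of_nonneg hq0
    have e2 : ((rz.toNat : ℕ) : ℤ) = rz := Int.toNat_of_nonneg hr0
    rcases hc with hcase | ⟨hRev, hcase⟩ | hcase | ⟨hLev, hcase⟩
    · -- m-1 ≡ R
      rcases heR with ⟨hs, he⟩ | ⟨hs, he⟩
      · rw [he] at hcase
        have hk := key 1 (by rw [hcase]; congr 1; ring)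
        refine Or.inl ⟨?_, by omega⟩
        rw [e1, hk]; congr 1; ring
      · rw [he] at hcase
        have hk := key 2 (by rw [hcase]; congr 1; ring)
        refine Or.inr (Or.inl ⟨?_, by omega⟩)
        rw [e1, hk]; congr 1; ring
    · -- R even, m-1 ≡ R+1
      rcases heR with ⟨hs, he⟩ | ⟨hs, he⟩
      · rw [he] at hcase hRev
        have hk := key 2 (by rw [hcase]; congr 1; ring)
        have hp := par 2 hk
        refine Or.inr (Or.inr (Or.inl ⟨?_, by omega, by omega⟩))
        rw [e1, hk]; congr 1; ring
      · rw [he] at hcase hRev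
        have hk := key 3 (by rw [hcase]; congr 1; ring)
        have hp := par 3 hk
        refine Or.inr (Or.inr (Or.inr (Or.inl ⟨?_, by omega, by omega⟩)))
        rw [e1, hk]; congr 1; ring
    · -- m-1 ≡ L-1
      rcases heL with ⟨hs, he⟩ | ⟨hs, he⟩
      · rw [he] at hcase
        have hk := key (-1) (by rw [hcase]; congr 1; ring)
        refine Or.inr (Or.inr (Or.inr (Or.inr (Or.inr (Or.inl ⟨?_, by omega⟩)))))
        rw [e1, hk]; congr 1; ring
      · rw [he] at hcase
        have hk := key (-2) (by rw [hcase]; congr 1; ring)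
        refine Or.inr (Or.inr (Or.inr (Or.inr (Or.inl ⟨?_, by omega⟩))))
        rw [e1, hk]; congr 1; ring
    · -- L even, m-1 ≡ L-2
      rcases heL with ⟨hs, he⟩ | ⟨hs, he⟩
      · rw [he] at hcase hLev
        have hk := key (-2) (by rw [hcase]; congr 1; ring)
        have hp := par (-2) hk
        refine Or.inr (Or.inr (Or.inr (Or.inr (Or.inr (Or.inr (Or.inr ⟨?_, by omega, by omega⟩))))))
        rw [e1, hk]; congr 1; ring
      · rw [he] at hcase hLev
        have hk := key (-3) (by rw [hcase]; congr 1; ring)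
        have hp := par (-3) hk
        refine Or.inr (Or.inr (Or.inr (Or.inr (Or.inr (Or.inr (Or.inl ⟨?_, by omega, by omega⟩))))))
        rw [e1, hk]; congr 1; ring
/-- For any `n`-level dyadic arc `Γ_{n,m}` and any `j ≥ n`, the number of `j`-level dyadic
arcs `Γ_{j,l}` whose annular decomposition `𝒫(Γ_{j,l})` contains `Γ_{n,m}` is at most
`3 · 2^{j-n}`. -/
theorem stmt_15 (n m j : ℕ) (hn : 1 ≤ n) (hm : m ∈ Finset.Icc 1 (2 ^ n)) (hj : n ≤ j) :
    Set.ncard {l | l ∈ Finset.Icc 1 (2 ^ j) ∧ inducesArc j l n m} ≤ 3 * 2 ^ (j - n) := by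
  rw [Finset.mem_Icc] at hm
  by_cases hje : n = j
  · subst hje
    have hsub : {l | l ∈ Finset.Icc 1 (2 ^ n) ∧ inducesArc n l n m} ⊆
        (↑({m, m + 1, m - 1} : Finset ℕ) : Set ℕ) := by
      rintro l ⟨hlmem, hind⟩
      rw [Finset.mem_Icc] at hlmem
      simp only [inducesArc] at hind
      rcases hind with ⟨-, hcase⟩ | ⟨-, hlt, -⟩
      · simp only [Finset.coe_insert, Set.mem_insert_iff, Finset.coe_singleton,
          Set.mem_singleton_iff]
        omega
      · omega
    calc Set.ncard {l | l ∈ Finset.Icc 1 (2 ^ n) ∧ inducesArc n l n m}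
        ≤ ({m, m + 1, m - 1} : Finset ℕ).card := by
          rw [← Set.ncard_coe_finset]
          exact Set.ncard_le_ncard hsub (Finset.finite_toSet _)
      _ ≤ 3 := by
          apply le_trans (Finset.card_insert_le _ _)
          have h2 := Finset.card_insert_le (m + 1) ({m - 1} : Finset ℕ)
          simp only [Finset.card_singleton] at h2 ⊢
          omega
      _ ≤ 3 * 2 ^ (n - n) := by simp
  · have hnj : n < j := lt_of_le_of_ne hj hje
    set B : ℕ := 2 ^ (j - n) with hBdef
    have hB2 : 2 ≤ B := Nat.one_lt_two_pow_iff.mpr (by omega)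
    set Tpar : Finset ℕ :=
      (if (m:ℤ) % 2 = 0 then
        blk (((m:ℤ) - 3) % 2 ^ n).toNat B 0 2 ∪ blk (((m:ℤ) - 4) % 2 ^ n).toNat B 2 (B - 2)
      else
        blk (((m:ℤ) + 2) % 2 ^ n).toNat B 0 (B - 2) ∪
          blk (((m:ℤ) + 1) % 2 ^ n).toNat B (B - 2) 2) with hTpar
    set T : Finset ℕ :=
      blk (((m:ℤ) - 2) % 2 ^ n).toNat B 0 2 ∪ blk (((m:ℤ) - 3) % 2 ^ n).toNat B 2 (B - 2) ∪
        blk (((m:ℤ) + 1) % 2 ^ n).toNat B 0 (B - 2) ∪ blk ((m:ℤ) % 2 ^ n).toNat B (B - 2) 2 ∪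
        Tpar with hT
    have hsub : {l | l ∈ Finset.Icc 1 (2 ^ j) ∧ inducesArc j l n m} ⊆ (↑T : Set ℕ) := by
      rintro l ⟨hlmem, hind⟩
      rw [Finset.mem_Icc] at hlmem
      obtain ⟨v, r, hl, hr, hdisj⟩ := loc n j l m hn hnj hlmem.1 hlmem.2 hm.1 hm.2 hind
      rw [← hBdef] at hl hr hdisj
      simp only [hT, hTpar, Finset.coe_union, Set.mem_union, Finset.mem_coe]
      rcases hdisj with ⟨hv, hrr⟩ | ⟨hv, hrr⟩ | ⟨hv, hrr, hp⟩ | ⟨hv, hrr, hp⟩ |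
        ⟨hv, hrr⟩ | ⟨hv, hrr⟩ | ⟨hv, hrr, hp⟩ | ⟨hv, hrr, hp⟩
      · have hveq : v = (((m:ℤ) - 2) % 2 ^ n).toNat := by rw [← hv]; simp
        rw [hveq] at hl
        exact Or.inl (Or.inl (Or.inl (Or.inl (mem_blk hl (by omega) (by omega)))))
      · have hveq : v = (((m:ℤ) - 3) % 2 ^ n).toNat := by rw [← hv]; simp
        rw [hveq] at hl
        exact Or.inl (Or.inl (Or.inl (Or.inr (mem_blk hl (by omega) (by omega)))))
      · have hveq : v = (((m:ℤ) - 3) % 2 ^ n).toNat := by rw [← hv]; simp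
        rw [hveq] at hl
        refine Or.inr ?_
        rw [if_pos hp]
        exact Finset.mem_union_left _ (mem_blk hl (by omega) (by omega))
      · have hveq : v = (((m:ℤ) - 4) % 2 ^ n).toNat := by rw [← hv]; simp
        rw [hveq] at hl
        refine Or.inr ?_
        rw [if_pos hp]
        exact Finset.mem_union_right _ (mem_blk hl (by omega) (by omega))
      · have hveq : v = (((m:ℤ) + 1) % 2 ^ n).toNat := by rw [← hv]; simp
        rw [hveq] at hl
        exact Or.inl (Or.inl (Or.inr (mem_blk hl (by omega) (by omega))))
      · have hveq : v = ((m:ℤ) % 2 ^ n).toNat := by rw [← hv]; simp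
        rw [hveq] at hl
        exact Or.inl (Or.inr (mem_blk hl (by omega) (by omega)))
      · have hveq : v = (((m:ℤ) + 2) % 2 ^ n).toNat := by rw [← hv]; simp
        rw [hveq] at hl
        refine Or.inr ?_
        rw [if_neg (by omega)]
        exact Finset.mem_union_left _ (mem_blk hl (by omega) (by omega))
      · have hveq : v = (((m:ℤ) + 1) % 2 ^ n).toNat := by rw [← hv]; simp
        rw [hveq] at hl
        refine Or.inr ?_
        rw [if_neg (by omega)]
        exact Finset.mem_union_right _ (mem_blk hl (by omega) (by omega))
    have hTpcard : Tpar.card ≤ 2 + (B - 2) := by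
      rw [hTpar]
      split_ifs
      · refine le_trans (Finset.card_union_le _ _) ?_
        exact Nat.add_le_add (card_blk _ _ _ _) (card_blk _ _ _ _)
      · refine le_trans (Finset.card_union_le _ _) ?_
        have := card_blk (((m:ℤ) + 2) % 2 ^ n).toNat B 0 (B - 2)
        have := card_blk (((m:ℤ) + 1) % 2 ^ n).toNat B (B - 2) 2
        omega
    have hTcard : T.card ≤ 3 * B := by
      rw [hT]
      refine le_trans (Finset.card_union_le _ _) ?_
      have h1 := Finset.card_union_le
        (blk (((m:ℤ) - 2) % 2 ^ n).toNat B 0 2 ∪ blk (((m:ℤ) - 3) % 2 ^ n).toNat B 2 (B - 2) ∪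
          blk (((m:ℤ) + 1) % 2 ^ n).toNat B 0 (B - 2)) (blk ((m:ℤ) % 2 ^ n).toNat B (B - 2) 2)
      have h2 := Finset.card_union_le
        (blk (((m:ℤ) - 2) % 2 ^ n).toNat B 0 2 ∪ blk (((m:ℤ) - 3) % 2 ^ n).toNat B 2 (B - 2))
        (blk (((m:ℤ) + 1) % 2 ^ n).toNat B 0 (B - 2))
      have h3 := Finset.card_union_le (blk (((m:ℤ) - 2) % 2 ^ n).toNat B 0 2)
        (blk (((m:ℤ) - 3) % 2 ^ n).toNat B 2 (B - 2))
      have c1 := card_blk (((m:ℤ) - 2) % 2 ^ n).toNat B 0 2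
      have c2 := card_blk (((m:ℤ) - 3) % 2 ^ n).toNat B 2 (B - 2)
      have c3 := card_blk (((m:ℤ) + 1) % 2 ^ n).toNat B 0 (B - 2)
      have c4 := card_blk ((m:ℤ) % 2 ^ n).toNat B (B - 2) 2
      omega
    calc Set.ncard {l | l ∈ Finset.Icc 1 (2 ^ j) ∧ inducesArc j l n m}
        ≤ T.card := by
          rw [← Set.ncard_coe_finset]
          exact Set.ncard_le_ncard hsub (Finset.finite_toSet _)
      _ ≤ 3 * B := hTcard
end
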